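/- arXiv:2409.07007 — 2 statements merged into one kernel-verified Lean document; each statement's English description precedes it below -/
import Mathlib

section
/- Let A ∈ ℂ^{m×n×p}, W ∈ ℂ^{n×m×p}, rank_M(A) = rp, rank_M(W) = sp with sp ≤ rp. Suppose W *_M P = Q *_M R where: P ∈ ℂ^{m×m×p} satisfies P *_M P^* = I_M = P^* *_M P; Q ∈ ℂ^{n×n×p} satisfies Q *_M Q^* = I_M = Q^* *_M Q; R ∈ ℂ^{n×m×p} has rank_M(R) = sp and its horizontal slices s+1,…,n vanish. Let Q̃ = Q(:,1:s,:) ∈ ℂ^{n×s×p} be the first s lateral slices of Q and R̃ = R(1:s,:,:) ∈ ℂ^{s×m×p} the first s horizontal slices of R, and suppose rank_M(R̃) = sp. If there exists an outer inverse X of A with R_M(X) = R_M(W) and N_M(X) = N_M(W), then the tensor R̃ *_M P^* *_M A *_M Q̃ ∈ ℂ^{s×s×p} is invertible and X = Q̃ *_M (R̃ *_M P^* *_M A *_M Q̃)^{-1} *_M R̃ *_M P^*. -/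
open Matrix Finset

/-- A third-order tensor in `ℂ^{m×n×p}`, given by its `p` frontal slices. -/
abbrev Tensor (m n p : ℕ) := Fin p → Matrix (Fin m) (Fin n) ℂ

/-- The transform `Â = A ×₃ M` (mode-3 product with `M`). -/
noncomputable def hatT {m n p : ℕ} (M : Matrix (Fin p) (Fin p) ℂ) (A : Tensor m n p) :
    Tensor m n p :=
  fun l => ∑ s, M l s • A s

/-- `mat(A)`: the block-diagonal matrix whose blocks are frontal slices of `A ×₃ M`. -/
noncomputable def matT {m n p : ℕ} (M : Matrix (Fin p) (Fin p) ℂ) (A : Tensor m n p) :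
    Matrix (Fin m × Fin p) (Fin n × Fin p) ℂ :=
  Matrix.blockDiagonal (hatT M A)

/-- The M-product `A *_M B`, determined by `mat(A *_M B) = mat(A)·mat(B)`. -/
noncomputable def mprod {m n k p : ℕ} (M : Matrix (Fin p) (Fin p) ℂ)
    (A : Tensor m n p) (B : Tensor n k p) : Tensor m k p :=
  fun l => ∑ s, M⁻¹ l s • (hatT M A s * hatT M B s)

/-- The conjugate transpose `A^*`, determined by `mat(A^*) = mat(A)^*`. -/
noncomputable def mstar {m n p : ℕ} (M : Matrix (Fin p) (Fin p) ℂ) (A : Tensor m n p) :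
    Tensor n m p :=
  fun l => ∑ s, M⁻¹ l s • (hatT M A s)ᴴ

/-- The identity tensor `I_M ∈ ℂ^{m×m×p}`, determined by `mat(I_M) = I`. -/
noncomputable def idT {p : ℕ} (M : Matrix (Fin p) (Fin p) ℂ) (m : ℕ) : Tensor m m p :=
  fun l => ∑ s, M⁻¹ l s • (1 : Matrix (Fin m) (Fin m) ℂ)

/-- M-product powers of a square tensor. -/
noncomputable def mpow {m p : ℕ} (M : Matrix (Fin p) (Fin p) ℂ) (A : Tensor m m p) :
    ℕ → Tensor m m p
  | 0 => idT M m
  | k + 1 => mprod M A (mpow M A k)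

/-- `R_M(A)`: the column space of `mat(A)`. -/
noncomputable def rangeM {m n p : ℕ} (M : Matrix (Fin p) (Fin p) ℂ) (A : Tensor m n p) :
    Submodule ℂ (Fin m × Fin p → ℂ) :=
  LinearMap.range (matT M A).mulVecLin

/-- `N_M(A)`: the kernel of `mat(A)`. -/
noncomputable def kerM {m n p : ℕ} (M : Matrix (Fin p) (Fin p) ℂ) (A : Tensor m n p) :
    Submodule ℂ (Fin n × Fin p → ℂ) :=
  LinearMap.ker (matT M A).mulVecLin

/-- `rank_M(A) = rank(mat(A))`. -/
noncomputable def rankM {m n p : ℕ} (M : Matrix (Fin p) (Fin p) ℂ) (A : Tensor m n p) : ℕ :=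
  (matT M A).rank

/-- The first `s` lateral slices `Q(:,1:s,:)`. -/
def latSlice {n s p : ℕ} (hsn : s ≤ n) (Q : Tensor n n p) : Tensor n s p :=
  fun l => (Q l).submatrix id (Fin.castLE hsn)

/-- The first `s` horizontal slices `R(1:s,:,:)`. -/
def horSlice {n m s p : ℕ} (hsn : s ≤ n) (R : Tensor n m p) : Tensor s m p :=
  fun l => (R l).submatrix (Fin.castLE hsn) id

/-- Frobenius norm of a complex matrix. -/
noncomputable def frobNorm {α β : Type*} [Fintype α] [Fintype β] (X : Matrix α β ℂ) : ℝ :=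
  Real.sqrt (∑ i, ∑ j, ‖X i j‖ ^ 2)
section MatrixAux

open Matrix

variable {ι κ σ α : Type*}

lemma mulVecLin_inj' [Fintype κ] [DecidableEq κ] {A B : Matrix ι κ ℂ}
    (h : A.mulVecLin = B.mulVecLin) : A = B := by
  apply Matrix.toLin'.injective
  rw [Matrix.toLin'_apply', Matrix.toLin'_apply', h]

lemma mat_ext_of_mulVec [Fintype κ] [DecidableEq κ] {A B : Matrix ι κ ℂ}
    (h : ∀ v, A *ᵥ v = B *ᵥ v) : A = B :=
  mulVecLin_inj' (LinearMap.ext fun v => by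
    simpa [Matrix.mulVecLin_apply] using h v)

lemma exists_right_inv [Fintype ι] [Fintype σ] [DecidableEq ι] [DecidableEq σ]
    (S : Matrix σ ι ℂ) (hS : S.rank = Fintype.card σ) :
    ∃ C : Matrix ι σ ℂ, S * C = 1 := by
  have hrange : LinearMap.range S.mulVecLin = ⊤ := by
    apply Submodule.eq_top_of_finrank_eq
    rw [Module.finrank_fintype_fun_eq_card]
    exact hS
  obtain ⟨g, hg⟩ := S.mulVecLin.exists_rightInverse_of_surjective hrange
  refine ⟨LinearMap.toMatrix' g, mulVecLin_inj' ?_⟩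
  rw [Matrix.mulVecLin_mul, Matrix.mulVecLin_one]
  have hgm : (LinearMap.toMatrix' g).mulVecLin = g := by
    rw [← Matrix.toLin'_apply']
    exact Matrix.toLin'_toMatrix' g
  rw [hgm]
  exact hg

lemma left_cancel [Fintype κ] [Fintype σ] [DecidableEq σ] (Qt : Matrix κ σ ℂ) (hQ : Qtᴴ * Qt = 1)
    {Z Z' : Matrix σ α ℂ} (h : Qt * Z = Qt * Z') : Z = Z' := by
  calc Z = (Qtᴴ * Qt) * Z := by rw [hQ, Matrix.one_mul]
    _ = Qtᴴ * (Qt * Z) := by rw [Matrix.mul_assoc]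
    _ = Qtᴴ * (Qt * Z') := by rw [h]
    _ = (Qtᴴ * Qt) * Z' := by rw [Matrix.mul_assoc]
    _ = Z' := by rw [hQ, Matrix.one_mul]

lemma right_cancel [Fintype ι] [Fintype σ] [DecidableEq σ] (S : Matrix σ ι ℂ) (C : Matrix ι σ ℂ)
    (hC : S * C = 1) {Z Z' : Matrix α σ ℂ} (h : Z * S = Z' * S) : Z = Z' := by
  calc Z = Z * (S * C) := by rw [hC, Matrix.mul_one]
    _ = (Z * S) * C := by rw [Matrix.mul_assoc]
    _ = (Z' * S) * C := by rw [h]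
    _ = Z' * (S * C) := by rw [Matrix.mul_assoc]
    _ = Z' := by rw [hC, Matrix.mul_one]

lemma key_outer [Fintype ι] [Fintype κ] [Fintype σ]
    [DecidableEq ι] [DecidableEq κ] [DecidableEq σ]
    (A : Matrix ι κ ℂ) (X : Matrix κ ι ℂ) (Qt : Matrix κ σ ℂ) (S : Matrix σ ι ℂ)
    (hQ : Qtᴴ * Qt = 1) (hS : S.rank = Fintype.card σ)
    (hout : X * A * X = X)
    (hR : LinearMap.range X.mulVecLin = LinearMap.range (Qt * S).mulVecLin)
    (hN : LinearMap.ker X.mulVecLin = LinearMap.ker (Qt * S).mulVecLin) :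
    ∃ U : Matrix σ σ ℂ, S * A * Qt * U = 1 ∧ U * (S * A * Qt) = 1 ∧ X = Qt * U * S := by
  obtain ⟨C, hC⟩ := exists_right_inv S hS
  have hXQ : Qt * (Qtᴴ * X) = X := by
    apply mat_ext_of_mulVec
    intro v
    have hv : X *ᵥ v ∈ LinearMap.range (Qt * S).mulVecLin := by
      rw [← hR]; exact ⟨v, rfl⟩
    obtain ⟨w, hw⟩ := hv
    have hw' : (Qt * S) *ᵥ w = X *ᵥ v := hw
    calc (Qt * (Qtᴴ * X)) *ᵥ v = Qt *ᵥ (Qtᴴ *ᵥ (X *ᵥ v)) := by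
          rw [← Matrix.mulVec_mulVec, ← Matrix.mulVec_mulVec]
      _ = Qt *ᵥ (Qtᴴ *ᵥ ((Qt * S) *ᵥ w)) := by rw [hw']
      _ = (Qt * (Qtᴴ * (Qt * S))) *ᵥ w := by
          rw [Matrix.mulVec_mulVec, Matrix.mulVec_mulVec, Matrix.mul_assoc]
      _ = (Qt * S) *ᵥ w := by rw [← Matrix.mul_assoc Qtᴴ Qt S, hQ, Matrix.one_mul]
      _ = X *ᵥ v := hw'
  have hkerQS : LinearMap.ker (Qt * S).mulVecLin = LinearMap.ker S.mulVecLin := by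
    ext v
    simp only [LinearMap.mem_ker, Matrix.mulVecLin_apply]
    constructor
    · intro h
      have h2 := congrArg (fun u => Qtᴴ *ᵥ u) h
      simp only [Matrix.mulVec_mulVec, Matrix.mulVec_zero, ← Matrix.mul_assoc, hQ,
        Matrix.one_mul] at h2
      exact h2
    · intro h
      rw [← Matrix.mulVec_mulVec, h, Matrix.mulVec_zero]
  have hkerX : LinearMap.ker X.mulVecLin = LinearMap.ker S.mulVecLin := hN.trans hkerQS
  have hXS : X * C * S = X := by
    apply mat_ext_of_mulVec
    intro v
    have hker : S *ᵥ (v - (C * S) *ᵥ v) = 0 := by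
      rw [Matrix.mulVec_sub, Matrix.mulVec_mulVec, ← Matrix.mul_assoc, hC, Matrix.one_mul,
        sub_self]
    have hx : X *ᵥ (v - (C * S) *ᵥ v) = 0 := by
      have hmem : (v - (C * S) *ᵥ v) ∈ LinearMap.ker X.mulVecLin := by
        rw [hkerX]
        simpa [Matrix.mulVecLin_apply] using hker
      simpa [Matrix.mulVecLin_apply] using hmem
    rw [Matrix.mulVec_sub] at hx
    have hx2 : X *ᵥ v = X *ᵥ ((C * S) *ᵥ v) := by
      have := sub_eq_zero.mp hx
      exact this
    calc (X * C * S) *ᵥ v = X *ᵥ ((C * S) *ᵥ v) := by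
          rw [Matrix.mulVec_mulVec, Matrix.mul_assoc]
      _ = X *ᵥ v := hx2.symm
  set U := Qtᴴ * X * C with hU
  have hXfact : X = Qt * U * S := by
    calc X = Qt * (Qtᴴ * X) := hXQ.symm
      _ = Qt * (Qtᴴ * (X * C * S)) := by rw [hXS]
      _ = Qt * U * S := by simp only [hU, Matrix.mul_assoc]
  have houter : U * (S * A * Qt) * U = U := by
    apply left_cancel Qt hQ
    apply right_cancel S C hC
    have hout2 := hout
    rw [hXfact] at hout2
    calc Qt * (U * (S * A * Qt) * U) * S = (Qt * U * S) * A * (Qt * U * S) := by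
          simp only [Matrix.mul_assoc]
      _ = Qt * U * S := hout2
      _ = Qt * U * S := rfl
  have hrQS : (Qt * S).rank = Fintype.card σ := by
    apply le_antisymm
    · calc (Qt * S).rank ≤ S.rank := Matrix.rank_mul_le_right _ _
        _ = _ := hS
    · have h1 : S = Qtᴴ * (Qt * S) := by rw [← Matrix.mul_assoc, hQ, Matrix.one_mul]
      calc Fintype.card σ = S.rank := hS.symm
        _ = (Qtᴴ * (Qt * S)).rank := by rw [← h1]
        _ ≤ (Qt * S).rank := Matrix.rank_mul_le_right _ _
  have hrX : X.rank = Fintype.card σ := by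
    have h1 : X.rank = (Qt * S).rank := by
      unfold Matrix.rank
      rw [hR]
    rw [h1, hrQS]
  have hrU : U.rank = Fintype.card σ := by
    refine le_antisymm (Matrix.rank_le_card_width U) ?_
    calc Fintype.card σ = X.rank := hrX.symm
      _ = (Qt * U * S).rank := by rw [← hXfact]
      _ ≤ (Qt * U).rank := Matrix.rank_mul_le_left _ _
      _ ≤ U.rank := Matrix.rank_mul_le_right _ _
  obtain ⟨V, hUV⟩ := exists_right_inv U hrU
  have hUB : U * (S * A * Qt) = 1 := by
    calc U * (S * A * Qt) = (U * (S * A * Qt) * U) * V := by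
          rw [Matrix.mul_assoc (U * (S * A * Qt)) U V, hUV, Matrix.mul_one]
      _ = U * V := by rw [houter]
      _ = 1 := hUV
  have hBU : S * A * Qt * U = 1 := mul_eq_one_comm.mp hUB
  exact ⟨U, hBU, hUB, hXfact⟩

end MatrixAux

section TensorAux

variable {m n k p s : ℕ} {M : Matrix (Fin p) (Fin p) ℂ}

lemma sum_one_smul (C : Tensor m n p) (t : Fin p) :
    ∑ u, (1 : Matrix (Fin p) (Fin p) ℂ) t u • C u = C t := by
  simp [Matrix.one_apply, ite_smul]

lemma hat_linear (hM : IsUnit M.det) (C : Tensor m n p) :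
    hatT M (fun l => ∑ u, M⁻¹ l u • C u) = C := by
  funext t
  show ∑ l, M t l • ∑ u, M⁻¹ l u • C u = C t
  calc ∑ l, M t l • ∑ u, M⁻¹ l u • C u
      = ∑ l, ∑ u, (M t l * M⁻¹ l u) • C u := by simp [Finset.smul_sum, smul_smul]
    _ = ∑ u, (∑ l, M t l * M⁻¹ l u) • C u := by
        rw [Finset.sum_comm]
        simp [Finset.sum_smul]
    _ = ∑ u, (M * M⁻¹) t u • C u := by simp [Matrix.mul_apply]
    _ = ∑ u, (1 : Matrix (Fin p) (Fin p) ℂ) t u • C u := by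
        rw [Matrix.mul_nonsing_inv _ hM]
    _ = C t := sum_one_smul C t

lemma inv_hat (hM : IsUnit M.det) (A : Tensor m n p) :
    (fun l => ∑ u, M⁻¹ l u • hatT M A u) = A := by
  funext t
  show ∑ l, M⁻¹ t l • ∑ u, M l u • A u = A t
  calc ∑ l, M⁻¹ t l • ∑ u, M l u • A u
      = ∑ l, ∑ u, (M⁻¹ t l * M l u) • A u := by simp [Finset.smul_sum, smul_smul]
    _ = ∑ u, (∑ l, M⁻¹ t l * M l u) • A u := by
        rw [Finset.sum_comm]
        simp [Finset.sum_smul]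
    _ = ∑ u, (M⁻¹ * M) t u • A u := by simp [Matrix.mul_apply]
    _ = ∑ u, (1 : Matrix (Fin p) (Fin p) ℂ) t u • A u := by
        rw [Matrix.nonsing_inv_mul _ hM]
    _ = A t := sum_one_smul A t

lemma matT_inj (hM : IsUnit M.det) :
    Function.Injective (matT M : Tensor m n p → _) := by
  intro A B h
  have h1 : hatT M A = hatT M B := by
    funext l
    ext i j
    have h2 := congrFun (congrFun h (i, l)) (j, l)
    simpa [matT, Matrix.blockDiagonal_apply] using h2
  calc A = (fun l => ∑ u, M⁻¹ l u • hatT M A u) := (inv_hat hM A).symm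
    _ = (fun l => ∑ u, M⁻¹ l u • hatT M B u) := by rw [h1]
    _ = B := inv_hat hM B

lemma hatT_mprod (hM : IsUnit M.det) (A : Tensor m n p) (B : Tensor n k p) :
    hatT M (mprod M A B) = fun l => hatT M A l * hatT M B l := by
  unfold mprod
  exact hat_linear hM _

lemma hatT_mstar (hM : IsUnit M.det) (A : Tensor m n p) :
    hatT M (mstar M A) = fun l => (hatT M A l)ᴴ := by
  unfold mstar
  exact hat_linear hM _

lemma hatT_idT (hM : IsUnit M.det) :
    hatT M (idT M m) = fun _ => (1 : Matrix (Fin m) (Fin m) ℂ) := by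
  unfold idT
  exact hat_linear hM _

lemma matT_mprod (hM : IsUnit M.det) (A : Tensor m n p) (B : Tensor n k p) :
    matT M (mprod M A B) = matT M A * matT M B := by
  unfold matT
  rw [hatT_mprod hM, ← Matrix.blockDiagonal_mul]

lemma matT_mstar (hM : IsUnit M.det) (A : Tensor m n p) :
    matT M (mstar M A) = (matT M A)ᴴ := by
  unfold matT
  rw [hatT_mstar hM, Matrix.blockDiagonal_conjTranspose]

lemma matT_idT (hM : IsUnit M.det) : matT M (idT M m) = 1 := by
  unfold matT
  rw [hatT_idT hM]
  exact Matrix.blockDiagonal_one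

lemma hatT_latSlice (hsn : s ≤ n) (Q : Tensor n n p) :
    hatT M (latSlice hsn Q) = fun l => (hatT M Q l).submatrix id (Fin.castLE hsn) := by
  funext l
  ext i j
  simp [hatT, latSlice, Matrix.sum_apply]

lemma hatT_horSlice (hsn : s ≤ n) (R : Tensor n m p) :
    hatT M (horSlice hsn R) = fun l => (hatT M R l).submatrix (Fin.castLE hsn) id := by
  funext l
  ext i j
  simp [hatT, horSlice, Matrix.sum_apply]

lemma sum_trunc {n s : ℕ} (hsn : s ≤ n) (f : Fin n → ℂ)
    (h0 : ∀ k : Fin n, s ≤ (k : ℕ) → f k = 0) :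
    ∑ k, f k = ∑ k : Fin s, f (Fin.castLE hsn k) := by
  have hmap : ∑ k : Fin s, f (Fin.castLE hsn k)
      = ∑ x ∈ Finset.univ.map (Fin.castLEEmb hsn), f x := by
    rw [Finset.sum_map]
    rfl
  rw [hmap]
  refine (Finset.sum_subset (Finset.subset_univ _) fun x _ hx => h0 x ?_).symm
  by_contra hlt
  push_neg at hlt
  exact hx (Finset.mem_map.2 ⟨⟨(x : ℕ), hlt⟩, Finset.mem_univ _, by ext; simp⟩)

end TensorAux

section SliceAux

variable {m n k p s : ℕ} {M : Matrix (Fin p) (Fin p) ℂ}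

lemma matT_latSlice (hsn : s ≤ n) (Q : Tensor n n p) :
    matT M (latSlice hsn Q)
      = (matT M Q).submatrix id (Prod.map (Fin.castLE hsn) id) := by
  ext ⟨i, l⟩ ⟨j, t⟩
  simp [matT, hatT_latSlice hsn, Matrix.blockDiagonal_apply, Prod.map]

lemma matT_horSlice (hsn : s ≤ n) (R : Tensor n m p) :
    matT M (horSlice hsn R)
      = (matT M R).submatrix (Prod.map (Fin.castLE hsn) id) id := by
  ext ⟨i, l⟩ ⟨j, t⟩
  simp [matT, hatT_horSlice hsn, Matrix.blockDiagonal_apply, Prod.map]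

lemma submatrix_unitary {κ σ : Type*} [Fintype κ] [Fintype σ] [DecidableEq κ] [DecidableEq σ]
    (A : Matrix κ κ ℂ) (hA : Aᴴ * A = 1) (f : σ → κ) (hf : Function.Injective f) :
    (A.submatrix id f)ᴴ * A.submatrix id f = 1 := by
  ext a b
  have h := congrFun (congrFun hA (f a)) (f b)
  rw [Matrix.mul_apply] at h
  rw [Matrix.mul_apply]
  simp only [Matrix.conjTranspose_apply, Matrix.submatrix_apply, id] at h ⊢
  rw [h]
  simp [Matrix.one_apply, hf.eq_iff]

lemma mul_eq_slices {mm : ℕ} (hsn : s ≤ n) (Qm : Matrix (Fin n) (Fin n) ℂ)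
    (Rm : Matrix (Fin n) (Fin mm) ℂ) (h0 : ∀ i : Fin n, s ≤ (i : ℕ) → ∀ j, Rm i j = 0) :
    Qm * Rm = Qm.submatrix id (Fin.castLE hsn) * Rm.submatrix (Fin.castLE hsn) id := by
  ext i j
  rw [Matrix.mul_apply, Matrix.mul_apply]
  simp only [Matrix.submatrix_apply, id]
  exact sum_trunc hsn _ (fun u hu => by rw [h0 u hu j, mul_zero])

lemma matT_mul_slices (hsn : s ≤ n) (Q : Tensor n n p) (R : Tensor n m p)
    (h0 : ∀ l (i : Fin n), s ≤ (i : ℕ) → ∀ j, R l i j = 0) :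
    matT M Q * matT M R = matT M (latSlice hsn Q) * matT M (horSlice hsn R) := by
  unfold matT
  rw [hatT_latSlice hsn, hatT_horSlice hsn, ← Matrix.blockDiagonal_mul,
    ← Matrix.blockDiagonal_mul]
  have hfun : (fun l => hatT M Q l * hatT M R l)
      = fun l => (hatT M Q l).submatrix id (Fin.castLE hsn)
          * (hatT M R l).submatrix (Fin.castLE hsn) id := by
    funext l
    apply mul_eq_slices hsn
    intro i hi j
    have h1 : hatT M R l i j = ∑ u, M l u * R u i j := by
      simp [hatT, Matrix.sum_apply]
    rw [h1]
    exact Finset.sum_eq_zero fun u _ => by rw [h0 u i hi j, mul_zero]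
  rw [hfun]

end SliceAux

/-- Theorem 3.3 (a)+(b): expression of the outer inverse via the M-QR decomposition of `W`. -/
theorem outer_inverse_MQR {m n p r s : ℕ} (hsn : s ≤ n)
    (M : Matrix (Fin p) (Fin p) ℂ) (hM : IsUnit M.det)
    (A : Tensor m n p) (W : Tensor n m p)
    (P : Tensor m m p) (Q : Tensor n n p) (R : Tensor n m p)
    (hrA : rankM M A = r * p) (hrW : rankM M W = s * p) (hle : s * p ≤ r * p)
    (hQR : mprod M W P = mprod M Q R)
    (hP1 : mprod M P (mstar M P) = idT M m) (hP2 : mprod M (mstar M P) P = idT M m)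
    (hQ1 : mprod M Q (mstar M Q) = idT M n) (hQ2 : mprod M (mstar M Q) Q = idT M n)
    (hrR : rankM M R = s * p)
    (hRvanish : ∀ l (i : Fin n), s ≤ (i : ℕ) → ∀ j, R l i j = 0)
    (hrRt : rankM M (horSlice hsn R) = s * p)
    (X : Tensor n m p)
    (hout : mprod M X (mprod M A X) = X)
    (hRX : rangeM M X = rangeM M W) (hNX : kerM M X = kerM M W) :
    ∃ Y : Tensor s s p,
      mprod M (mprod M (horSlice hsn R) (mprod M (mstar M P) (mprod M A (latSlice hsn Q)))) Y
        = idT M s ∧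
      mprod M Y (mprod M (horSlice hsn R) (mprod M (mstar M P) (mprod M A (latSlice hsn Q))))
        = idT M s ∧
      X = mprod M (latSlice hsn Q) (mprod M Y (mprod M (horSlice hsn R) (mstar M P))) := by
  classical
  -- matrix-level names
  have hQunit : (matT M Q)ᴴ * matT M Q = 1 := by
    have h := congrArg (matT M) hQ2
    rwa [matT_mprod hM, matT_mstar hM, matT_idT hM] at h
  have hPunit1 : matT M P * (matT M P)ᴴ = 1 := by
    have h := congrArg (matT M) hP1
    rwa [matT_mprod hM, matT_mstar hM, matT_idT hM] at h
  have hPunit2 : (matT M P)ᴴ * matT M P = 1 := by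
    have h := congrArg (matT M) hP2
    rwa [matT_mprod hM, matT_mstar hM, matT_idT hM] at h
  have hQtiso : (matT M (latSlice hsn Q))ᴴ * matT M (latSlice hsn Q) = 1 := by
    rw [matT_latSlice hsn]
    exact submatrix_unitary _ hQunit _
      ((Fin.castLE_injective hsn).prodMap Function.injective_id)
  have hdetP : IsUnit ((matT M P)ᴴ).det := by
    apply IsUnit.of_mul_eq_one (matT M P).det
    rw [← Matrix.det_mul, hPunit2, Matrix.det_one]
  have hS : (matT M (horSlice hsn R) * (matT M P)ᴴ).rank = Fintype.card (Fin s × Fin p) := by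
    rw [Matrix.rank_mul_eq_left_of_isUnit_det _ _ hdetP]
    have hcard : Fintype.card (Fin s × Fin p) = s * p := by simp
    rw [hcard]
    exact hrRt
  have hWP : matT M W * matT M P = matT M Q * matT M R := by
    have h := congrArg (matT M) hQR
    rwa [matT_mprod hM, matT_mprod hM] at h
  have hslices : matT M Q * matT M R
      = matT M (latSlice hsn Q) * matT M (horSlice hsn R) :=
    matT_mul_slices hsn Q R hRvanish
  have hWm : matT M W = matT M (latSlice hsn Q) * (matT M (horSlice hsn R) * (matT M P)ᴴ) := by
    calc matT M W = matT M W * (matT M P * (matT M P)ᴴ) := by rw [hPunit1, Matrix.mul_one]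
      _ = (matT M W * matT M P) * (matT M P)ᴴ := by rw [Matrix.mul_assoc]
      _ = (matT M (latSlice hsn Q) * matT M (horSlice hsn R)) * (matT M P)ᴴ := by
          rw [hWP, hslices]
      _ = _ := by rw [Matrix.mul_assoc]
  have houtm : matT M X * matT M A * matT M X = matT M X := by
    have h := congrArg (matT M) hout
    rw [matT_mprod hM, matT_mprod hM] at h
    rw [Matrix.mul_assoc]
    exact h
  have hRm : LinearMap.range (matT M X).mulVecLin
      = LinearMap.range (matT M (latSlice hsn Q)
          * (matT M (horSlice hsn R) * (matT M P)ᴴ)).mulVecLin := by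
    rw [← hWm]
    exact hRX
  have hNm : LinearMap.ker (matT M X).mulVecLin
      = LinearMap.ker (matT M (latSlice hsn Q)
          * (matT M (horSlice hsn R) * (matT M P)ᴴ)).mulVecLin := by
    rw [← hWm]
    exact hNX
  obtain ⟨U, hBU, hUB, hXfact⟩ := key_outer (matT M A) (matT M X)
    (matT M (latSlice hsn Q)) (matT M (horSlice hsn R) * (matT M P)ᴴ)
    hQtiso hS houtm hRm hNm
  set Bt := mprod M (horSlice hsn R) (mprod M (mstar M P) (mprod M A (latSlice hsn Q)))
    with hBtdef
  have hmatBt : matT M Bt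
      = matT M (horSlice hsn R) * (matT M P)ᴴ * matT M A * matT M (latSlice hsn Q) := by
    rw [hBtdef, matT_mprod hM, matT_mprod hM, matT_mprod hM, matT_mstar hM]
    simp only [Matrix.mul_assoc]
  have hdetBt : IsUnit (matT M Bt).det := by
    apply IsUnit.of_mul_eq_one U.det
    rw [← Matrix.det_mul, hmatBt, hBU, Matrix.det_one]
  have hblock : ∀ l, IsUnit (hatT M Bt l).det := by
    have h := hdetBt
    rw [show matT M Bt = Matrix.blockDiagonal (hatT M Bt) from rfl,
      Matrix.det_blockDiagonal, isUnit_iff_ne_zero, Finset.prod_ne_zero_iff] at h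
    intro l
    rw [isUnit_iff_ne_zero]
    exact h l (Finset.mem_univ l)
  set Yt : Tensor s s p := fun l => ∑ u, M⁻¹ l u • (hatT M Bt u)⁻¹ with hYt
  have hhatY : hatT M Yt = fun u => (hatT M Bt u)⁻¹ := hat_linear hM _
  have hmatY1 : matT M Bt * matT M Yt = 1 := by
    rw [show matT M Bt * matT M Yt
        = Matrix.blockDiagonal (hatT M Bt) * Matrix.blockDiagonal (hatT M Yt) from rfl,
      hhatY, ← Matrix.blockDiagonal_mul,
      show (fun l => hatT M Bt l * (hatT M Bt l)⁻¹) = fun _ => 1 from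
        funext fun l => Matrix.mul_nonsing_inv _ (hblock l)]
    exact Matrix.blockDiagonal_one
  have hmatY2 : matT M Yt * matT M Bt = 1 := by
    rw [show matT M Yt * matT M Bt
        = Matrix.blockDiagonal (hatT M Yt) * Matrix.blockDiagonal (hatT M Bt) from rfl,
      hhatY, ← Matrix.blockDiagonal_mul,
      show (fun l => (hatT M Bt l)⁻¹ * hatT M Bt l) = fun _ => 1 from
        funext fun l => Matrix.nonsing_inv_mul _ (hblock l)]
    exact Matrix.blockDiagonal_one
  have hYU : matT M Yt = U := by
    calc matT M Yt
        = (U * (matT M (horSlice hsn R) * (matT M P)ᴴ * matT M A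
            * matT M (latSlice hsn Q))) * matT M Yt := by
          rw [hUB, Matrix.one_mul]
      _ = U * (matT M Bt * matT M Yt) := by
          rw [hmatBt]
          simp only [Matrix.mul_assoc]
      _ = U := by rw [hmatY1, Matrix.mul_one]
  refine ⟨Yt, ?_, ?_, ?_⟩
  · apply matT_inj hM
    rw [matT_mprod hM, matT_idT hM]
    exact hmatY1
  · apply matT_inj hM
    rw [matT_mprod hM, matT_idT hM]
    exact hmatY2
  · apply matT_inj hM
    rw [matT_mprod hM, matT_mprod hM, matT_mprod hM, matT_mstar hM, hYU]
    calc matT M X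
        = matT M (latSlice hsn Q) * U * (matT M (horSlice hsn R) * (matT M P)ᴴ) := hXfact
      _ = matT M (latSlice hsn Q) * (U * (matT M (horSlice hsn R) * (matT M P)ᴴ)) := by
          simp only [Matrix.mul_assoc]
end

section
/- Let A ∈ ℂ^{m×n×p} with rank_M(A) = rp, and assume A admits a Moore–Penrose inverse A†. Suppose A^* = Q̃ *_M R̃ *_M P^* is a full-rank decomposition where P ∈ ℂ^{m×m×p} satisfies P *_M P^* = I_M = P^* *_M P, Q̃ ∈ ℂ^{n×r×p} satisfies Q̃^* *_M Q̃ = I_M, and R̃ ∈ ℂ^{r×m×p} has rank_M(R̃) = rp. Then R̃ *_M P^* *_M A *_M Q̃ is invertible and Q̃ *_M (R̃ *_M P^* *_M A *_M Q̃)^{-1} *_M R̃ *_M P^* = A†. -/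
open Matrix Finset

lemma sum_smul_one_apply {p m n : ℕ} (N : Matrix (Fin p) (Fin p) ℂ) (hN : N = 1)
    (C : Tensor m n p) (l : Fin p) : ∑ t, N l t • C t = C l := by
  subst hN
  rw [Finset.sum_eq_single l]
  · simp
  · intro b _ hb; simp [Matrix.one_apply, (Ne.symm hb)]
  · simp

lemma hatT_reconstruct {m n p : ℕ} {M : Matrix (Fin p) (Fin p) ℂ} (hM : IsUnit M.det)
    (C : Tensor m n p) : hatT M (fun l => ∑ s, M⁻¹ l s • C s) = C := by
  funext l
  show ∑ s, M l s • ∑ t, M⁻¹ s t • C t = C l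
  calc ∑ s, M l s • ∑ t, M⁻¹ s t • C t
      = ∑ s, ∑ t, (M l s * M⁻¹ s t) • C t := by
        simp [Finset.smul_sum, smul_smul]
    _ = ∑ t, ∑ s, (M l s * M⁻¹ s t) • C t := Finset.sum_comm
    _ = ∑ t, (M * M⁻¹) l t • C t := by
        simp [Matrix.mul_apply, Finset.sum_smul]
    _ = C l := sum_smul_one_apply _ (Matrix.mul_nonsing_inv M hM) C l

lemma hatT_recover {m n p : ℕ} {M : Matrix (Fin p) (Fin p) ℂ} (hM : IsUnit M.det)
    (A : Tensor m n p) : (fun l => ∑ s, M⁻¹ l s • hatT M A s) = A := by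
  funext l
  show ∑ s, M⁻¹ l s • ∑ t, M s t • A t = A l
  calc ∑ s, M⁻¹ l s • ∑ t, M s t • A t
      = ∑ s, ∑ t, (M⁻¹ l s * M s t) • A t := by
        simp [Finset.smul_sum, smul_smul]
    _ = ∑ t, ∑ s, (M⁻¹ l s * M s t) • A t := Finset.sum_comm
    _ = ∑ t, (M⁻¹ * M) l t • A t := by
        simp [Matrix.mul_apply, Finset.sum_smul]
    _ = A l := sum_smul_one_apply _ (Matrix.nonsing_inv_mul M hM) A l

lemma hatT_injective {m n p : ℕ} {M : Matrix (Fin p) (Fin p) ℂ} (hM : IsUnit M.det)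
    {A B : Tensor m n p} (h : hatT M A = hatT M B) : A = B := by
  rw [← hatT_recover hM A, ← hatT_recover hM B, h]

lemma mp_unique {m n : ℕ} (a : Matrix (Fin m) (Fin n) ℂ) (x z : Matrix (Fin n) (Fin m) ℂ)
    (hx1 : a * (x * a) = a) (hx2 : x * (a * x) = x)
    (hx3 : (a * x)ᴴ = a * x) (hx4 : (x * a)ᴴ = x * a)
    (hz1 : a * (z * a) = a) (hz2 : z * (a * z) = z)
    (hz3 : (a * z)ᴴ = a * z) (hz4 : (z * a)ᴴ = z * a) : z = x := by
  have hax : a * x = a * z := by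
    calc a * x = (a * (z * a)) * x := by rw [hz1]
      _ = (a * z) * (a * x) := by simp only [Matrix.mul_assoc]
      _ = (a * z)ᴴ * (a * x)ᴴ := by rw [hz3, hx3]
      _ = ((a * x) * (a * z))ᴴ := by simp only [conjTranspose_mul, Matrix.mul_assoc]
      _ = ((a * (x * a)) * z)ᴴ := by simp only [Matrix.mul_assoc]
      _ = (a * z)ᴴ := by rw [hx1]
      _ = a * z := hz3
  have hxa : x * a = z * a := by
    calc x * a = x * (a * (z * a)) := by rw [hz1]
      _ = (x * a) * (z * a) := by simp only [Matrix.mul_assoc]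
      _ = (x * a)ᴴ * (z * a)ᴴ := by rw [hz4, hx4]
      _ = ((z * a) * (x * a))ᴴ := by simp only [conjTranspose_mul, Matrix.mul_assoc]
      _ = (z * (a * (x * a)))ᴴ := by simp only [Matrix.mul_assoc]
      _ = (z * a)ᴴ := by rw [hx1]
      _ = z * a := hz4
  calc z = z * (a * z) := hz2.symm
    _ = (z * a) * z := by simp only [Matrix.mul_assoc]
    _ = (x * a) * z := by rw [hxa]
    _ = x * (a * z) := by simp only [Matrix.mul_assoc]
    _ = x * (a * x) := by rw [hax]
    _ = x := hx2

lemma slice_key {m n r : ℕ} (a : Matrix (Fin m) (Fin n) ℂ) (x : Matrix (Fin n) (Fin m) ℂ)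
    (p : Matrix (Fin m) (Fin m) ℂ) (q : Matrix (Fin n) (Fin r) ℂ) (t : Matrix (Fin r) (Fin m) ℂ)
    (h1 : a * (x * a) = a) (h2 : x * (a * x) = x)
    (h3 : (a * x)ᴴ = a * x) (h4 : (x * a)ᴴ = x * a)
    (hdec : aᴴ = q * (t * pᴴ)) (hp1 : p * pᴴ = 1) (hp2 : pᴴ * p = 1) (hq : qᴴ * q = 1)
    (ht : IsUnit (t * tᴴ)) :
    (t * (pᴴ * (a * q))) * (t * tᴴ)⁻¹ = 1 ∧
    (t * tᴴ)⁻¹ * (t * (pᴴ * (a * q))) = 1 ∧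
    q * ((t * tᴴ)⁻¹ * (t * pᴴ)) = x := by
  have ha : a = p * (tᴴ * qᴴ) := by
    have := congrArg conjTranspose hdec
    simpa [conjTranspose_mul, Matrix.mul_assoc] using this
  set B := t * tᴴ with hB
  have htd : IsUnit B.det := (isUnit_iff_isUnit_det B).mp ht
  have hBi : B * B⁻¹ = 1 := mul_nonsing_inv B htd
  have hiB : B⁻¹ * B = 1 := nonsing_inv_mul B htd
  have hBherm : Bᴴ = B := by rw [hB, conjTranspose_mul, conjTranspose_conjTranspose]
  have hBinvherm : (B⁻¹)ᴴ = B⁻¹ := by rw [Matrix.conjTranspose_nonsing_inv, hBherm]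
  have key : t * (pᴴ * (a * q)) = B := by
    rw [ha, hB]
    calc t * (pᴴ * ((p * (tᴴ * qᴴ)) * q))
        = t * ((pᴴ * p) * (tᴴ * (qᴴ * q))) := by simp only [Matrix.mul_assoc]
      _ = t * tᴴ := by rw [hp2, hq]; simp [Matrix.mul_assoc]
  refine ⟨by rw [key]; exact hBi, by rw [key]; exact hiB, ?_⟩
  set z := q * ((t * tᴴ)⁻¹ * (t * pᴴ)) with hz
  have haz : a * z = p * (tᴴ * (B⁻¹ * (t * pᴴ))) := by
    rw [hz, ha, ← hB]
    calc (p * (tᴴ * qᴴ)) * (q * (B⁻¹ * (t * pᴴ)))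
        = p * (tᴴ * ((qᴴ * q) * (B⁻¹ * (t * pᴴ)))) := by simp only [Matrix.mul_assoc]
      _ = p * (tᴴ * (B⁻¹ * (t * pᴴ))) := by rw [hq]; simp [Matrix.mul_assoc]
  have hza : z * a = q * qᴴ := by
    rw [hz, ha, ← hB]
    calc (q * (B⁻¹ * (t * pᴴ))) * (p * (tᴴ * qᴴ))
        = q * (B⁻¹ * (t * ((pᴴ * p) * tᴴ))) * qᴴ := by simp only [Matrix.mul_assoc]
      _ = q * (B⁻¹ * B) * qᴴ := by rw [hp2, hB]; simp [Matrix.mul_assoc]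
      _ = q * qᴴ := by rw [hiB]; simp [Matrix.mul_assoc]
  have hz1 : a * (z * a) = a := by
    rw [hza]
    calc a * (q * qᴴ) = p * (tᴴ * ((qᴴ * q) * qᴴ)) := by rw [ha]; simp only [Matrix.mul_assoc]
      _ = p * (tᴴ * qᴴ) := by rw [hq]; simp [Matrix.mul_assoc]
      _ = a := ha.symm
  have hz2 : z * (a * z) = z := by
    rw [haz, hz, ← hB]
    calc (q * (B⁻¹ * (t * pᴴ))) * (p * (tᴴ * (B⁻¹ * (t * pᴴ))))
        = q * (B⁻¹ * ((t * ((pᴴ * p) * tᴴ)) * (B⁻¹ * (t * pᴴ)))) := by simp only [Matrix.mul_assoc]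
      _ = q * (B⁻¹ * (B * (B⁻¹ * (t * pᴴ)))) := by rw [hp2, hB]; simp [Matrix.mul_assoc]
      _ = q * (B⁻¹ * (t * pᴴ)) := by
          rw [← Matrix.mul_assoc B, hBi]; simp [Matrix.mul_assoc]
  have hz3 : (a * z)ᴴ = a * z := by
    rw [haz]
    simp only [conjTranspose_mul, conjTranspose_conjTranspose, hBinvherm]
    simp only [Matrix.mul_assoc]
  have hz4 : (z * a)ᴴ = z * a := by
    rw [hza, conjTranspose_mul, conjTranspose_conjTranspose]
  exact mp_unique a x z h1 h2 h3 h4 hz1 hz2 hz3 hz4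

lemma myrank_add_le {α β : Type*} [Fintype α] [Fintype β] [DecidableEq β]
    (A B : Matrix α β ℂ) : (A + B).rank ≤ A.rank + B.rank := by
  have hle : LinearMap.range (A + B).mulVecLin ≤
      LinearMap.range A.mulVecLin ⊔ LinearMap.range B.mulVecLin := by
    rintro y ⟨v, rfl⟩
    exact Submodule.mem_sup.2 ⟨A.mulVecLin v, ⟨v, rfl⟩, B.mulVecLin v, ⟨v, rfl⟩, by
      simp [Matrix.add_mulVec, Matrix.mulVecLin]⟩
  calc (A + B).rank ≤ Module.finrank ℂ
        (LinearMap.range A.mulVecLin ⊔ LinearMap.range B.mulVecLin : Submodule ℂ (α → ℂ)) :=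
        Submodule.finrank_mono hle
    _ ≤ A.rank + B.rank := Submodule.finrank_add_le_finrank_add_finrank _ _

lemma myrank_sum_le {ι α β : Type*} [Fintype α] [Fintype β] [DecidableEq β]
    (s : Finset ι) (f : ι → Matrix α β ℂ) :
    (∑ i ∈ s, f i).rank ≤ ∑ i ∈ s, (f i).rank := by
  classical
  induction s using Finset.induction_on with
  | empty => simp
  | insert _ _ h ih =>
    rw [Finset.sum_insert h, Finset.sum_insert h]
    exact (myrank_add_le _ _).trans (by omega)

lemma rank_blockDiagonal_single_le {r m p : ℕ} (k : Fin p) (C : Matrix (Fin r) (Fin m) ℂ) :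
    (blockDiagonal (Pi.single k C) : Matrix (Fin r × Fin p) (Fin m × Fin p) ℂ).rank ≤ C.rank := by
  classical
  have hfac : (blockDiagonal (Pi.single k C) : Matrix (Fin r × Fin p) (Fin m × Fin p) ℂ) =
      (Matrix.of fun (ab : Fin r × Fin p) (c : Fin r) => if ab = (c, k) then (1:ℂ) else 0) *
      (C * Matrix.of fun (j : Fin m) (cd : Fin m × Fin p) => if cd = (j, k) then (1:ℂ) else 0) := by
    ext ⟨a, b⟩ ⟨c, d⟩
    simp only [Matrix.mul_apply, Matrix.of_apply, blockDiagonal_apply, Prod.mk.injEq]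
    by_cases hb : b = k
    · subst hb
      by_cases hd : d = b
      · subst hd
        simp [Finset.sum_ite_eq, mul_ite, ite_mul, Pi.single_apply]
      · simp [Ne.symm hd, hd, Pi.single_apply, fun e : Fin m => (by tauto : ¬(c = e ∧ d = b))]
    · by_cases hd : b = d
      · subst hd
        simp [Pi.single_apply, hb, fun e : Fin r => (by tauto : ¬(a = e ∧ b = k))]
      · simp [hd, hb]
  rw [hfac]
  exact (Matrix.rank_mul_le_right _ _).trans (Matrix.rank_mul_le_left _ _)

lemma rank_slice_full {r m p : ℕ} (D : Fin p → Matrix (Fin r) (Fin m) ℂ)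
    (h : (blockDiagonal D : Matrix (Fin r × Fin p) (Fin m × Fin p) ℂ).rank = r * p)
    (k : Fin p) : (D k).rank = r := by
  classical
  have hdecomp : (blockDiagonal D : Matrix (Fin r × Fin p) (Fin m × Fin p) ℂ) =
      ∑ j, blockDiagonal (Pi.single j (D j)) := by
    conv_lhs => rw [← Finset.univ_sum_single D]
    exact map_sum (Matrix.blockDiagonalAddMonoidHom (Fin r) (Fin m) (Fin p) ℂ) _ _
  have hsum : (r * p : ℕ) ≤ ∑ j, (D j).rank := by
    calc (r * p : ℕ) = (blockDiagonal D : Matrix (Fin r × Fin p) (Fin m × Fin p) ℂ).rank := h.symm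
      _ ≤ ∑ j, (blockDiagonal (Pi.single j (D j)) :
            Matrix (Fin r × Fin p) (Fin m × Fin p) ℂ).rank := by
          rw [hdecomp]; exact myrank_sum_le _ _
      _ ≤ ∑ j, (D j).rank := Finset.sum_le_sum fun j _ => rank_blockDiagonal_single_le j (D j)
  have hub : ∀ j : Fin p, (D j).rank ≤ r := fun j => by
    simpa using Matrix.rank_le_card_height (D j)
  have hsum' : ∑ j, (D j).rank = ∑ j : Fin p, r := by
    have h2 : ∑ j : Fin p, (D j).rank ≤ ∑ j : Fin p, r := Finset.sum_le_sum fun j _ => hub j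
    have h3 : (∑ j : Fin p, r) = r * p := by simp [mul_comm]
    omega
  have := (Finset.sum_eq_sum_iff_of_le (fun j _ => hub j)).mp hsum'
  exact this k (Finset.mem_univ k)

open ComplexOrder in
lemma myrank_self_mul_conjTranspose {a b : ℕ} (A : Matrix (Fin a) (Fin b) ℂ) :
    (A * Aᴴ).rank = A.rank := Matrix.rank_self_mul_conjTranspose A

lemma isUnit_of_rank_eq {r : ℕ} (B : Matrix (Fin r) (Fin r) ℂ) (h : B.rank = r) : IsUnit B := by
  rw [← Matrix.mulVec_surjective_iff_isUnit]
  have htop : LinearMap.range B.mulVecLin = ⊤ := by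
    apply Submodule.eq_top_of_finrank_eq
    rw [Module.finrank_pi]
    simpa [Matrix.rank] using h
  intro y
  have : y ∈ LinearMap.range B.mulVecLin := htop ▸ Submodule.mem_top
  obtain ⟨v, hv⟩ := this
  exact ⟨v, hv⟩

/-- Corollary 3.4 (Moore–Penrose case): the outer-inverse formula built from a full-rank
QR-type decomposition of `A^*` yields the Moore–Penrose inverse. -/
theorem MQR_gives_moore_penrose {m n p r : ℕ}
    (M : Matrix (Fin p) (Fin p) ℂ) (hM : IsUnit M.det)
    (A : Tensor m n p) (X : Tensor n m p)
    (hrA : rankM M A = r * p)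
    (h1 : mprod M A (mprod M X A) = A)
    (h2 : mprod M X (mprod M A X) = X)
    (h3 : mstar M (mprod M A X) = mprod M A X)
    (h4 : mstar M (mprod M X A) = mprod M X A)
    (P : Tensor m m p) (Qt : Tensor n r p) (Rt : Tensor r m p)
    (hdec : mstar M A = mprod M Qt (mprod M Rt (mstar M P)))
    (hP1 : mprod M P (mstar M P) = idT M m) (hP2 : mprod M (mstar M P) P = idT M m)
    (hQt : mprod M (mstar M Qt) Qt = idT M r)
    (hrRt : rankM M Rt = r * p) :
    ∃ Y : Tensor r r p,
      mprod M (mprod M Rt (mprod M (mstar M P) (mprod M A Qt))) Y = idT M r ∧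
      mprod M Y (mprod M Rt (mprod M (mstar M P) (mprod M A Qt))) = idT M r ∧
      mprod M Qt (mprod M Y (mprod M Rt (mstar M P))) = X := by

  classical
  -- hat-transform algebra
  have hmul : ∀ {a b c : ℕ} (U : Tensor a b p) (V : Tensor b c p),
      hatT M (mprod M U V) = fun s => hatT M U s * hatT M V s := by
    intro a b c U V
    unfold mprod
    exact hatT_reconstruct hM _
  have hstar : ∀ {a b : ℕ} (U : Tensor a b p),
      hatT M (mstar M U) = fun s => (hatT M U s)ᴴ := by
    intro a b U
    unfold mstar
    exact hatT_reconstruct hM _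
  have hid : ∀ (a : ℕ), hatT M (idT M a) = fun _ => (1 : Matrix (Fin a) (Fin a) ℂ) := by
    intro a
    unfold idT
    exact hatT_reconstruct hM _
  -- slice invertibility of t * tᴴ
  have hslice : ∀ s : Fin p, (hatT M Rt s).rank = r := by
    intro s
    exact rank_slice_full (hatT M Rt) hrRt s
  have hunit : ∀ s : Fin p, IsUnit (hatT M Rt s * (hatT M Rt s)ᴴ) := by
    intro s
    apply isUnit_of_rank_eq
    rw [myrank_self_mul_conjTranspose, hslice s]
  -- the candidate tensor Y
  refine ⟨fun l => ∑ s, M⁻¹ l s • (hatT M Rt s * (hatT M Rt s)ᴴ)⁻¹, ?_, ?_, ?_⟩ <;>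
  · apply hatT_injective hM
    funext s
    have hY : hatT M (fun l => ∑ s, M⁻¹ l s • (hatT M Rt s * (hatT M Rt s)ᴴ)⁻¹) =
        fun s => (hatT M Rt s * (hatT M Rt s)ᴴ)⁻¹ := hatT_reconstruct hM _
    have e1 := congrFun (congrArg (hatT M) h1) s
    have e2 := congrFun (congrArg (hatT M) h2) s
    have e3 := congrFun (congrArg (hatT M) h3) s
    have e4 := congrFun (congrArg (hatT M) h4) s
    have ed := congrFun (congrArg (hatT M) hdec) s
    have ep1 := congrFun (congrArg (hatT M) hP1) s
    have ep2 := congrFun (congrArg (hatT M) hP2) s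
    have eq1 := congrFun (congrArg (hatT M) hQt) s
    simp only [hmul, hstar, hid] at e1 e2 e3 e4 ed ep1 ep2 eq1
    obtain ⟨g1, g2, g3⟩ := slice_key (hatT M A s) (hatT M X s) (hatT M P s)
      (hatT M Qt s) (hatT M Rt s) e1 e2 e3 e4 ed ep1 ep2 eq1 (hunit s)
    simp only [hmul, hstar, hid, hY]
    first
      | exact g1
      | exact g2
      | exact g3
end
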